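/- arXiv:1803.06083 — 2 statements merged into one kernel-verified Lean document; each statement's English description precedes it below -/
import Mathlib

section
/- Let (G, ω₁) and (H, ω₂) be weighted locally compact groups, φ : G → H an isomorphism of topological groups with measure adjustment constant c (so λ₁(E) = c λ₂(φ(E))), and γ : G → ℂ* a continuous multiplicative character with 0 < inf_x |γ(x)| ω₂(φ(x))/ω₁(x) and sup_x |γ(x)| ω₂(φ(x))/ω₁(x) < ∞. Then the weighted composition operator T(f) = c · (γ ∘ φ⁻¹) · (f ∘ φ⁻¹) is a bounded bijective algebra homomorphism from the convolution algebra L^p(G, ω₁) onto L^p(H, ω₂), i.e., T(f ∗ g) = T(f) ∗ T(g). -/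
open MeasureTheory ENNReal

/-- Membership in the weighted space `L^p(G, ω)`. -/
def MemWLp {G : Type*} [MeasurableSpace G] (μ : MeasureTheory.Measure G)
    (ω : G → ℝ) (p : ℝ) (f : G → ℂ) : Prop :=
  AEMeasurable f μ ∧
    ∫⁻ y, (‖f y‖₊ : ℝ≥0∞) ^ p * ENNReal.ofReal (ω y) ^ p ∂μ < ⊤

/-- Convolution `(f ∗ g)(y) = ∫ f(t) g(t⁻¹ y) dλ(t)`. -/
noncomputable def wConv {G : Type*} [Group G] [MeasurableSpace G]
    (μ : MeasureTheory.Measure G) (f g : G → ℂ) : G → ℂ :=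
  fun y => ∫ t, f t * g (t⁻¹ * y) ∂μ

/-- The weighted composition operator `T f = c · (γ ∘ ψ) · (f ∘ ψ)`
(with `ψ = φ⁻¹`). -/
def wCompOp {G H : Type*} (c : ℝ) (γ : G → ℂ) (ψ : H → G) (f : G → ℂ) :
    H → ℂ := fun y => (c : ℂ) * γ (ψ y) * f (ψ y)

/-- Given a standard isomorphism `(γ, φ)` between weighted locally compact
groups `(G, ω₁)` and `(H, ω₂)` with measure adjustment constant `c`, the
weighted composition operator `T f = c · (γ ∘ φ⁻¹) · (f ∘ φ⁻¹)` is a bounded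
bijective algebra homomorphism from `L^p(G, ω₁)` onto `L^p(H, ω₂)`. -/
theorem stmt7 {G H : Type*}
    [Group G] [TopologicalSpace G] [IsTopologicalGroup G] [LocallyCompactSpace G]
    [MeasurableSpace G] [BorelSpace G]
    [Group H] [TopologicalSpace H] [IsTopologicalGroup H] [LocallyCompactSpace H]
    [MeasurableSpace H] [BorelSpace H]
    (μ : Measure G) [μ.IsHaarMeasure] (ν : Measure H) [ν.IsHaarMeasure]
    (ω₁ : G → ℝ) (hω₁_pos : ∀ x, 0 < ω₁ x) (hω₁_cont : Continuous ω₁)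
    (hω₁_sub : ∀ x y, ω₁ (x * y) ≤ ω₁ x * ω₁ y) (hω₁_one : ω₁ 1 = 1)
    (ω₂ : H → ℝ) (hω₂_pos : ∀ x, 0 < ω₂ x) (hω₂_cont : Continuous ω₂)
    (hω₂_sub : ∀ x y, ω₂ (x * y) ≤ ω₂ x * ω₂ y) (hω₂_one : ω₂ 1 = 1)
    (p : ℝ) (hp : 1 ≤ p)
    (halgG : ∀ f g, MemWLp μ ω₁ p f → MemWLp μ ω₁ p g →
      MemWLp μ ω₁ p (wConv μ f g))
    (halgH : ∀ f g, MemWLp ν ω₂ p f → MemWLp ν ω₂ p g →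
      MemWLp ν ω₂ p (wConv ν f g))
    (φ : G ≃* H) (hφ : Continuous φ) (hφ_inv : Continuous φ.symm)
    (c : ℝ) (hc : 0 < c)
    (hmeas : ∀ E : Set G, MeasurableSet E → μ E = ENNReal.ofReal c * ν (φ '' E))
    (γ : G → ℂ) (hγ_cont : Continuous γ) (hγ_ne : ∀ a, γ a ≠ 0)
    (hγ_hom : ∀ a b, γ (a * b) = γ a * γ b)
    (m M : ℝ) (hm : 0 < m)
    (hbound : ∀ a, m ≤ ‖γ a‖ * ω₂ (φ a) / ω₁ a ∧ ‖γ a‖ * ω₂ (φ a) / ω₁ a ≤ M) :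
    (∀ f, MemWLp μ ω₁ p f → MemWLp ν ω₂ p (wCompOp c γ φ.symm f)) ∧
    (∃ C : ℝ, 0 < C ∧ ∀ f, MemWLp μ ω₁ p f →
      ∫⁻ y, (‖wCompOp c γ φ.symm f y‖₊ : ℝ≥0∞) ^ p *
          ENNReal.ofReal (ω₂ y) ^ p ∂ν
        ≤ ENNReal.ofReal C *
          ∫⁻ x, (‖f x‖₊ : ℝ≥0∞) ^ p * ENNReal.ofReal (ω₁ x) ^ p ∂μ) ∧
    (∀ f₁ f₂ : G → ℂ, wCompOp c γ φ.symm f₁ = wCompOp c γ φ.symm f₂ → f₁ = f₂) ∧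
    (∀ g, MemWLp ν ω₂ p g → ∃ f, MemWLp μ ω₁ p f ∧ wCompOp c γ φ.symm f = g) ∧
    (∀ f g, MemWLp μ ω₁ p f → MemWLp μ ω₁ p g →
      wCompOp c γ φ.symm (wConv μ f g) =
        wConv ν (wCompOp c γ φ.symm f) (wCompOp c γ φ.symm g)) := by
  
  have hp0 : 0 ≤ p := by linarith
  have hc' : (c : ℂ) ≠ 0 := by exact_mod_cast hc.ne'
  -- the measurable equivalence induced by φ
  let homeo : G ≃ₜ H :=
    { φ.toEquiv with continuous_toFun := hφ, continuous_invFun := hφ_inv }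
  let e : G ≃ᵐ H := homeo.toMeasurableEquiv
  have himg : ∀ E : Set G, ⇑φ '' E = ⇑φ.symm ⁻¹' E := fun E =>
    congrFun (Set.image_eq_preimage_of_inverse φ.symm_apply_apply
      φ.apply_symm_apply) E
  have hμ : μ = ENNReal.ofReal c • Measure.map e.symm ν := by
    ext E hE
    rw [Measure.smul_apply, Measure.map_apply e.symm.measurable hE, hmeas E hE,
      smul_eq_mul]
    congr 1
    rw [himg E]
    rfl
  have hc0 : ENNReal.ofReal c ≠ 0 := by
    simp [ENNReal.ofReal_eq_zero, not_le, hc]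
  have hct : ENNReal.ofReal c ≠ ⊤ := ENNReal.ofReal_ne_top
  have hlint : ∀ F : G → ℝ≥0∞,
      ∫⁻ x, F x ∂μ = ENNReal.ofReal c * ∫⁻ y, F (φ.symm y) ∂ν := by
    intro F
    rw [hμ, lintegral_smul_measure, MeasureTheory.lintegral_map_equiv F e.symm]
    rfl
  have hlint' : ∀ F : G → ℝ≥0∞,
      ∫⁻ y, F (φ.symm y) ∂ν = (ENNReal.ofReal c)⁻¹ * ∫⁻ x, F x ∂μ := by
    intro F
    rw [hlint F, ← mul_assoc, ENNReal.inv_mul_cancel hc0 hct, one_mul]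
  have hint : ∀ F : G → ℂ,
      ∫ x, F x ∂μ = (c : ℂ) * ∫ y, F (φ.symm y) ∂ν := by
    intro F
    rw [hμ, integral_smul_measure, MeasureTheory.integral_map_equiv e.symm F,
      ENNReal.toReal_ofReal hc.le, Complex.real_smul]
    rfl
  -- absolute continuity / measurability transfer
  have hac1 : Measure.map e.symm ν ≪ μ := by
    intro s hs
    rw [hμ, Measure.smul_apply, smul_eq_mul] at hs
    exact (mul_eq_zero.mp hs).resolve_left hc0
  have hmapφ : Measure.map e μ = ENNReal.ofReal c • ν := by
    rw [hμ, Measure.map_smul, MeasurableEquiv.map_map_symm]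
  have hac2 : Measure.map e μ ≪ ν := by
    intro s hs
    rw [hmapφ, Measure.smul_apply, smul_eq_mul, hs, mul_zero]
  have haem : ∀ f : G → ℂ, AEMeasurable f μ →
      AEMeasurable (fun y => f (φ.symm y)) ν := by
    intro f hf
    exact AEMeasurable.comp_aemeasurable (hf.mono_ac hac1)
      e.symm.measurable.aemeasurable
  have haem2 : ∀ g : H → ℂ, AEMeasurable g ν →
      AEMeasurable (fun x => g (φ x)) μ := by
    intro g hg
    exact AEMeasurable.comp_aemeasurable (hg.mono_ac hac2)
      e.measurable.aemeasurable
  have hγψ : Measurable fun y : H => γ (φ.symm y) :=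
    (hγ_cont.comp hφ_inv).measurable
  -- elementary rewriting of the weighted integrand
  have hkey : ∀ (z : ℂ) (w : ℝ), 0 ≤ w →
      (‖z‖₊ : ℝ≥0∞) ^ p * ENNReal.ofReal w ^ p
        = ENNReal.ofReal (‖z‖ * w) ^ p := by
    intro z w hw
    rw [ENNReal.ofReal_mul (norm_nonneg z), ofReal_norm, enorm_eq_nnnorm,
      ENNReal.mul_rpow_of_nonneg _ _ hp0]
  have hM : 0 < M := lt_of_lt_of_le hm ((hbound 1).1.trans (hbound 1).2)
  have hub : ∀ x, ‖γ x‖ * ω₂ (φ x) ≤ M * ω₁ x := fun x =>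
    (div_le_iff₀ (hω₁_pos x)).mp (hbound x).2
  have hlb : ∀ x, m * ω₁ x ≤ ‖γ x‖ * ω₂ (φ x) := fun x => by
    have := (le_div_iff₀ (hω₁_pos x)).mp (hbound x).1
    linarith
  have hnormT : ∀ (f : G → ℂ) (y : H),
      ‖wCompOp c γ φ.symm f y‖ = c * ‖γ (φ.symm y)‖ * ‖f (φ.symm y)‖ := by
    intro f y
    simp [wCompOp, norm_mul, Complex.norm_real, Real.norm_eq_abs,
      abs_of_pos hc]
  -- the main norm estimate
  have hmain : ∀ f : G → ℂ,
      ∫⁻ y, (‖wCompOp c γ φ.symm f y‖₊ : ℝ≥0∞) ^ p *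
          ENNReal.ofReal (ω₂ y) ^ p ∂ν
        ≤ ENNReal.ofReal ((c * M) ^ p / c) *
          ∫⁻ x, (‖f x‖₊ : ℝ≥0∞) ^ p * ENNReal.ofReal (ω₁ x) ^ p ∂μ := by
    intro f
    have hconst_ne : ENNReal.ofReal (c * M) ^ p ≠ ⊤ :=
      ENNReal.rpow_ne_top_of_nonneg hp0 ENNReal.ofReal_ne_top
    have step1 : ∀ y : H,
        (‖wCompOp c γ φ.symm f y‖₊ : ℝ≥0∞) ^ p * ENNReal.ofReal (ω₂ y) ^ p
          ≤ ENNReal.ofReal (c * M) ^ p *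
            ((‖f (φ.symm y)‖₊ : ℝ≥0∞) ^ p *
              ENNReal.ofReal (ω₁ (φ.symm y)) ^ p) := by
      intro y
      set x := φ.symm y with hx
      have hφx : φ x = y := φ.apply_symm_apply y
      rw [hkey _ _ (hω₂_pos y).le, hkey _ _ (hω₁_pos x).le,
        ← ENNReal.mul_rpow_of_nonneg _ _ hp0,
        ← ENNReal.ofReal_mul (mul_nonneg hc.le hM.le)]
      refine ENNReal.rpow_le_rpow (ENNReal.ofReal_le_ofReal ?_) hp0
      rw [hnormT f y, ← hx]
      calc c * ‖γ x‖ * ‖f x‖ * ω₂ y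
          = (c * ‖f x‖) * (‖γ x‖ * ω₂ (φ x)) := by rw [hφx]; ring
        _ ≤ (c * ‖f x‖) * (M * ω₁ x) :=
            mul_le_mul_of_nonneg_left (hub x) (by positivity)
        _ = c * M * (‖f x‖ * ω₁ x) := by ring
    calc ∫⁻ y, (‖wCompOp c γ φ.symm f y‖₊ : ℝ≥0∞) ^ p *
            ENNReal.ofReal (ω₂ y) ^ p ∂ν
        ≤ ∫⁻ y, ENNReal.ofReal (c * M) ^ p *
            ((‖f (φ.symm y)‖₊ : ℝ≥0∞) ^ p *
              ENNReal.ofReal (ω₁ (φ.symm y)) ^ p) ∂ν := lintegral_mono step1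
      _ = ENNReal.ofReal (c * M) ^ p *
            ∫⁻ y, (‖f (φ.symm y)‖₊ : ℝ≥0∞) ^ p *
              ENNReal.ofReal (ω₁ (φ.symm y)) ^ p ∂ν :=
          lintegral_const_mul' _ _ hconst_ne
      _ = ENNReal.ofReal (c * M) ^ p * ((ENNReal.ofReal c)⁻¹ *
            ∫⁻ x, (‖f x‖₊ : ℝ≥0∞) ^ p * ENNReal.ofReal (ω₁ x) ^ p ∂μ) := by
          rw [hlint' (fun x => (‖f x‖₊ : ℝ≥0∞) ^ p * ENNReal.ofReal (ω₁ x) ^ p)]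
      _ = ENNReal.ofReal ((c * M) ^ p / c) *
            ∫⁻ x, (‖f x‖₊ : ℝ≥0∞) ^ p * ENNReal.ofReal (ω₁ x) ^ p ∂μ := by
          rw [ENNReal.ofReal_div_of_pos hc,
            ENNReal.ofReal_rpow_of_pos (mul_pos hc hM), div_eq_mul_inv,
            mul_assoc]
  have hmem : ∀ f, MemWLp μ ω₁ p f → MemWLp ν ω₂ p (wCompOp c γ φ.symm f) := by
    intro f hf
    constructor
    · exact (aemeasurable_const.mul hγψ.aemeasurable).mul (haem f hf.1)
    · exact (hmain f).trans_lt
        (ENNReal.mul_lt_top ENNReal.ofReal_lt_top hf.2)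
  refine ⟨hmem, ⟨(c * M) ^ p / c, by positivity, fun f _ => hmain f⟩, ?_, ?_, ?_⟩
  · -- injectivity
    intro f₁ f₂ hT
    funext x
    have h := congrFun hT (φ x)
    simp only [wCompOp, φ.symm_apply_apply] at h
    exact mul_left_cancel₀ (mul_ne_zero hc' (hγ_ne x)) h
  · -- surjectivity
    intro g hg
    refine ⟨fun x => (c : ℂ)⁻¹ * (γ x)⁻¹ * g (φ x), ⟨?_, ?_⟩, ?_⟩
    · exact (aemeasurable_const.mul
        ((hγ_cont.inv₀ hγ_ne).measurable.aemeasurable)).mul (haem2 g hg.1)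
    · set f : G → ℂ := fun x => (c : ℂ)⁻¹ * (γ x)⁻¹ * g (φ x) with hfdef
      have hconst_ne : ENNReal.ofReal (c⁻¹ * m⁻¹) ^ p ≠ ⊤ :=
        ENNReal.rpow_ne_top_of_nonneg hp0 ENNReal.ofReal_ne_top
      have step : ∀ y : H,
          (‖f (φ.symm y)‖₊ : ℝ≥0∞) ^ p * ENNReal.ofReal (ω₁ (φ.symm y)) ^ p
            ≤ ENNReal.ofReal (c⁻¹ * m⁻¹) ^ p *
              ((‖g y‖₊ : ℝ≥0∞) ^ p * ENNReal.ofReal (ω₂ y) ^ p) := by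
        intro y
        set a := φ.symm y with ha
        have hφa : φ a = y := φ.apply_symm_apply y
        have hγa : (0:ℝ) < ‖γ a‖ := norm_pos_iff.mpr (hγ_ne a)
        rw [hkey _ _ (hω₁_pos a).le, hkey _ _ (hω₂_pos y).le,
          ← ENNReal.mul_rpow_of_nonneg _ _ hp0,
          ← ENNReal.ofReal_mul (by positivity)]
        refine ENNReal.rpow_le_rpow (ENNReal.ofReal_le_ofReal ?_) hp0
        have hfa : ‖f a‖ = c⁻¹ * ‖γ a‖⁻¹ * ‖g (φ a)‖ := by
          simp [hfdef, norm_mul, norm_inv, Complex.norm_real,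
            Real.norm_eq_abs, abs_of_pos hc]
        rw [hfa, hφa]
        have hω₁a : ω₁ a ≤ ‖γ a‖ * ω₂ y / m := by
          rw [le_div_iff₀ hm]
          have := hlb a
          rw [hφa] at this
          linarith
        calc c⁻¹ * ‖γ a‖⁻¹ * ‖g y‖ * ω₁ a
            ≤ c⁻¹ * ‖γ a‖⁻¹ * ‖g y‖ * (‖γ a‖ * ω₂ y / m) := by
              refine mul_le_mul_of_nonneg_left hω₁a (by positivity)
          _ = c⁻¹ * m⁻¹ * (‖g y‖ * ω₂ y) := by
              field_simp
      calc ∫⁻ x, (‖f x‖₊ : ℝ≥0∞) ^ p * ENNReal.ofReal (ω₁ x) ^ p ∂μ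
          = ENNReal.ofReal c * ∫⁻ y, (‖f (φ.symm y)‖₊ : ℝ≥0∞) ^ p *
              ENNReal.ofReal (ω₁ (φ.symm y)) ^ p ∂ν :=
            hlint (fun x => (‖f x‖₊ : ℝ≥0∞) ^ p * ENNReal.ofReal (ω₁ x) ^ p)
        _ ≤ ENNReal.ofReal c * ∫⁻ y, ENNReal.ofReal (c⁻¹ * m⁻¹) ^ p *
              ((‖g y‖₊ : ℝ≥0∞) ^ p * ENNReal.ofReal (ω₂ y) ^ p) ∂ν :=
            mul_le_mul_right (lintegral_mono step) _
        _ = ENNReal.ofReal c * (ENNReal.ofReal (c⁻¹ * m⁻¹) ^ p *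
              ∫⁻ y, (‖g y‖₊ : ℝ≥0∞) ^ p * ENNReal.ofReal (ω₂ y) ^ p ∂ν) := by
            rw [lintegral_const_mul' _ _ hconst_ne]
        _ < ⊤ := ENNReal.mul_lt_top ENNReal.ofReal_lt_top
            (ENNReal.mul_lt_top hconst_ne.lt_top hg.2)
    · funext y
      simp only [wCompOp]
      have hφy : φ (φ.symm y) = y := φ.apply_symm_apply y
      rw [hφy]
      field_simp [hγ_ne (φ.symm y)]
  · -- multiplicativity
    intro f g _ _
    funext y
    have hγx : ∀ a : G, γ a * γ (a⁻¹ * φ.symm y) = γ (φ.symm y) := fun a => by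
      rw [← hγ_hom, mul_inv_cancel_left]
    have hRHS : wConv ν (wCompOp c γ φ.symm f) (wCompOp c γ φ.symm g) y
        = ∫ s, ((c : ℂ) * (c : ℂ) * γ (φ.symm y)) *
            (f (φ.symm s) * g ((φ.symm s)⁻¹ * φ.symm y)) ∂ν := by
      unfold wConv wCompOp
      congr 1
      funext s
      have h1 : φ.symm (s⁻¹ * y) = (φ.symm s)⁻¹ * φ.symm y := by
        rw [map_mul, map_inv]
      rw [h1, ← hγx (φ.symm s)]
      ring
    rw [hRHS, MeasureTheory.integral_const_mul]
    show (c : ℂ) * γ (φ.symm y) * wConv μ f g (φ.symm y) = _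
    unfold wConv
    rw [hint (fun t => f t * g (t⁻¹ * φ.symm y))]
    ring
end

section
/- Let 1 ≤ p < ∞ and let T : L^p(μ) → L^p(ν) be a bijective bounded linear operator between L^p spaces of measure spaces such that both T and T⁻¹ are positive (map nonnegative functions to nonnegative functions). Then T preserves disjointness: if f · g = 0 a.e. then T(f) · T(g) = 0 a.e. -/
open MeasureTheory ENNReal

/-- A bipositive bounded bijective linear operator between `L^p` spaces of
σ-finite measure spaces preserves disjointness: if `f · g = 0` a.e. then
`T f · T g = 0` a.e. -/
theorem stmt16 {X Y : Type*} [MeasurableSpace X] [MeasurableSpace Y]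
    (μ : Measure X) (ν : Measure Y) [SigmaFinite μ] [SigmaFinite ν]
    (p : ℝ≥0∞) [Fact (1 ≤ p)] (hp' : p ≠ ⊤)
    (T : Lp ℝ p μ →L[ℝ] Lp ℝ p ν)
    (hbij : Function.Bijective T)
    (hpos : ∀ f : Lp ℝ p μ, 0 ≤ f → 0 ≤ T f)
    (hpos_inv : ∀ f : Lp ℝ p μ, 0 ≤ T f → 0 ≤ f)
    (f g : Lp ℝ p μ)
    (hfg : (fun x => f x * g x) =ᵐ[μ] 0) :
    (fun y => T f y * T g y) =ᵐ[ν] 0 := by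
  -- T as an order isomorphism
  let e : Lp ℝ p μ ≃o Lp ℝ p ν :=
    { toEquiv := Equiv.ofBijective T hbij
      map_rel_iff' := by
        intro a b
        constructor
        · intro h
          have h' : 0 ≤ T (b - a) := by
            rw [map_sub]; exact sub_nonneg.mpr h
          have := hpos_inv (b - a) h'
          simpa [sub_nonneg] using this
        · intro h
          have := hpos (b - a) (sub_nonneg.mpr h)
          rw [map_sub] at this
          simpa [sub_nonneg] using this }
  have heT : ∀ x, e x = T x := fun _ => rfl
  -- |f| ⊓ |g| = 0 in Lp
  have h0 : |f| ⊓ |g| = 0 := by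
    apply Lp.ext
    filter_upwards [hfg, Lp.coeFn_inf |f| |g|, Lp.coeFn_abs f, Lp.coeFn_abs g,
      (Lp.coeFn_zero ℝ p μ : ⇑(0 : Lp ℝ p μ) =ᵐ[μ] 0)] with x hx hinf habsf habsg hz
    rw [hinf, hz]
    simp only [Pi.inf_apply, Pi.zero_apply, habsf, habsg]
    rcases mul_eq_zero.mp hx with h | h
    · simp [h, min_eq_left, abs_nonneg]
    · simp [h, min_eq_right, abs_nonneg]
  -- T |f| ⊓ T |g| = 0
  have hT0 : T |f| ⊓ T |g| = 0 := by
    rw [← heT, ← heT, ← e.map_inf, h0, heT, map_zero]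
  -- |T f| ≤ T |f|, |T g| ≤ T |g|
  have habsle : ∀ a : Lp ℝ p μ, |T a| ≤ T |a| := by
    intro a
    refine abs_le'.mpr ⟨?_, ?_⟩
    · have : 0 ≤ T (|a| - a) := hpos _ (sub_nonneg.mpr (le_abs_self a))
      rw [map_sub] at this
      exact sub_nonneg.mp this
    · have h1 : (0 : Lp ℝ p μ) ≤ |a| + a := by
        rw [← sub_neg_eq_add, sub_nonneg]
        exact neg_le_abs a
      have : 0 ≤ T (|a| + a) := hpos _ h1
      rw [map_add] at this
      have := sub_nonneg.mp (by rwa [sub_neg_eq_add] : 0 ≤ T |a| - -(T a))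
      exact this
  -- |T f| ⊓ |T g| = 0
  have hTfg : |T f| ⊓ |T g| = 0 := by
    have hle : |T f| ⊓ |T g| ≤ 0 := by
      rw [← hT0]
      exact inf_le_inf (habsle f) (habsle g)
    have hge : 0 ≤ |T f| ⊓ |T g| := le_inf (abs_nonneg _) (abs_nonneg _)
    exact le_antisymm hle hge
  -- conclude pointwise
  have hz : ⇑(|T f| ⊓ |T g|) =ᵐ[ν] 0 := by
    rw [hTfg]; exact Lp.coeFn_zero ℝ p ν
  filter_upwards [Lp.coeFn_inf |T f| |T g|, Lp.coeFn_abs (T f), Lp.coeFn_abs (T g),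
    hz] with y hinf habsf habsg hzy
  have hmin : min |T f y| |T g y| = 0 := by
    rw [Pi.inf_apply] at hinf
    simp only [habsf, habsg] at hinf
    simpa using hinf.symm.trans hzy
  rcases min_eq_iff.mp hmin with ⟨h, _⟩ | ⟨h, _⟩
  · simp [abs_eq_zero.mp h]
  · simp [abs_eq_zero.mp h]
end
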